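/- Let U be a d×(d+1) real matrix with columns u_0,…,u_d, let v_i, v_j ∈ ℝ^d, h_k ∈ ℝ with ⟨u_k, v_i⟩ = h_k and ⟨u_k, v_j⟩ = h_k for all k ∉ {i,j}, plus ⟨u_i,v_i⟩ < h_i, ⟨u_j,v_j⟩ < h_j. Let A be the (d+1)×(d+1) matrix with rows (u_kᵀ, −h_k) and let D_{ij} be the (d+1)×(d+1) matrix with columns (u_k, 0) for k ∉ {i,j} and columns (v_i, 1), (v_j, 1) in positions i and j. Then A·D_{ij} equals the Gram matrix UᵀU with columns i and j replaced by a_i e_i and a_j e_j respectively, where a_k = ⟨u_k,v_k⟩ − h_k; consequently det(A·D_{ij}) = a_i a_j · det(U_{(ij)}ᵀ U_{(ij)}) > 0, where U_{(ij)} is U with columns i,j deleted and U_{(ij)} has linearly independent columns. -/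

import Mathlib

open Matrix

lemma det_two_single {n : Type*} [DecidableEq n] [Fintype n]
    (M : Matrix n n ℝ) (i j : n) (hij : i ≠ j)
    (hcoli : ∀ k, k ≠ i → M k i = 0) (hcolj : ∀ k, k ≠ j → M k j = 0) :
    M.det = M i i * M j j *
      (Matrix.of (fun a b : {k : n // k ≠ i ∧ k ≠ j} => M a b)).det := by
  classical
  set p : n → Prop := fun k => k = i ∨ k = j with hp
  rw [← Matrix.det_submatrix_equiv_self (Equiv.sumCompl p) M]
  have hsub : M.submatrix (Equiv.sumCompl p) (Equiv.sumCompl p) =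
      Matrix.fromBlocks
        (Matrix.of fun a b : {k // p k} => M a b)
        (Matrix.of fun (a : {k // p k}) (b : {k // ¬ p k}) => M a b)
        0
        (Matrix.of fun a b : {k // ¬ p k} => M a b) := by
    ext a b
    cases a with
    | inl a =>
      cases b with
      | inl b => simp
      | inr b => simp
    | inr a =>
      cases b with
      | inl b =>
        simp only [submatrix_apply, Equiv.sumCompl_apply_inl, Equiv.sumCompl_apply_inr,
          fromBlocks_apply₂₁, Matrix.zero_apply]
        rcases b.2 with hb | hb
        · rw [hb]; exact hcoli _ (fun hc => a.2 (Or.inl hc))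
        · rw [hb]; exact hcolj _ (fun hc => a.2 (Or.inr hc))
      | inr b => simp
  rw [hsub, Matrix.det_fromBlocks_zero₂₁]
  have h2 : ∀ x : n, (x ≠ i ∧ x ≠ j) ↔ ¬ p x := by
    intro x; simp [hp, not_or]
  congr 1
  · -- the 2×2 block is diagonal with entries M i i, M j j
    have hdiag : (Matrix.of fun a b : {k // p k} => M a b) =
        Matrix.diagonal (fun a : {k // p k} => M a a) := by
      ext a b
      by_cases hab : a = b
      · subst hab; simp
      · have hval : (a : n) ≠ (b : n) := fun hc => hab (Subtype.ext hc)
        rw [Matrix.diagonal_apply_ne _ hab]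
        rcases b.2 with hb | hb
        · simp only [Matrix.of_apply]
          rw [hb]; exact hcoli _ (by rw [hb] at hval; exact hval)
        · simp only [Matrix.of_apply]
          rw [hb]; exact hcolj _ (by rw [hb] at hval; exact hval)
    rw [hdiag, Matrix.det_diagonal]
    rw [← Finset.prod_subtype ({i, j} : Finset n) (by simp [hp])
      (fun k => M k k)]
    rw [Finset.prod_pair hij]
  · -- reindex the complement
    rw [← Matrix.det_submatrix_equiv_self (Equiv.subtypeEquivRight h2)
      (Matrix.of fun a b : {k // ¬ p k} => M a b)]
    congr 1

lemma gram_posDef {d : ℕ} {ι : Type*} [Fintype ι] [DecidableEq ι]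
    (w : ι → (Fin d → ℝ)) (hind : LinearIndependent ℝ w) :
    (Matrix.of (fun a b : ι => w a ⬝ᵥ w b)).PosDef := by
  classical
  set B : Matrix (Fin d) ι ℝ := Matrix.of fun r a => w a r with hB
  have hG : (Matrix.of (fun a b : ι => w a ⬝ᵥ w b)) = Bᵀ * B := by
    ext a b
    simp [hB, Matrix.mul_apply, dotProduct, mul_comm]
  rw [Matrix.posDef_iff_dotProduct_mulVec]
  constructor
  · ext a b
    simp [Matrix.conjTranspose_apply, dotProduct_comm]
  · intro x hx
    have hBx : B *ᵥ x ≠ 0 := by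
      intro hc
      apply hx
      have := Fintype.linearIndependent_iff.mp hind x ?_
      · funext a; exact this a
      · funext r
        have := congrFun hc r
        simpa [hB, Matrix.mulVec, dotProduct, mul_comm, Finset.sum_apply] using this
    have key : (star x) ⬝ᵥ ((Matrix.of (fun a b : ι => w a ⬝ᵥ w b)) *ᵥ x)
        = (B *ᵥ x) ⬝ᵥ (B *ᵥ x) := by
      rw [hG, ← Matrix.mulVec_mulVec]
      rw [show (star x : ι → ℝ) = x from rfl]
      rw [Matrix.dotProduct_mulVec, Matrix.vecMul_transpose]
    rw [key]
    exact lt_of_le_of_ne (Finset.sum_nonneg fun r _ => mul_self_nonneg _)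
      (fun hc => hBx (dotProduct_self_eq_zero.mp hc.symm))

/-- With `A` the `(d+1)×(d+1)` matrix with rows `(u k ᵀ, −h k)` and
`D` the matrix with columns `(u k, 0)` for `k ∉ {i,j}` and `(vᵢ, 1)`, `(vⱼ, 1)` in
positions `i`, `j`, the product `A·D` is the Gram matrix `UᵀU` with columns `i`, `j`
replaced by `aᵢ eᵢ` and `aⱼ eⱼ` (where `a k = ⟨u k, v k⟩ − h k`); consequently
`det(A·D) = aᵢ aⱼ · det(U₍ᵢⱼ₎ᵀ U₍ᵢⱼ₎) > 0` when the columns `u k`, `k ∉ {i,j}`, are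
linearly independent. -/
theorem stmt10 (d : ℕ) (u : Fin (d + 1) → (Fin d → ℝ)) (vi vj : Fin d → ℝ)
    (h : Fin (d + 1) → ℝ) (i j : Fin (d + 1)) (hij : i ≠ j)
    (hvi : ∀ k, k ≠ i → u k ⬝ᵥ vi = h k)
    (hvj : ∀ k, k ≠ j → u k ⬝ᵥ vj = h k)
    (hai : u i ⬝ᵥ vi < h i) (haj : u j ⬝ᵥ vj < h j)
    (hind : LinearIndependent ℝ (fun k : {k : Fin (d + 1) // k ≠ i ∧ k ≠ j} => u k))
    (A D : Matrix (Fin (d + 1)) (Fin (d + 1)) ℝ)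
    (hA : ∀ k, (∀ c : Fin d, A k c.castSucc = u k c) ∧ A k (Fin.last d) = -h k)
    (hDi : (∀ r : Fin d, D r.castSucc i = vi r) ∧ D (Fin.last d) i = 1)
    (hDj : (∀ r : Fin d, D r.castSucc j = vj r) ∧ D (Fin.last d) j = 1)
    (hDk : ∀ c, c ≠ i → c ≠ j →
      (∀ r : Fin d, D r.castSucc c = u c r) ∧ D (Fin.last d) c = 0) :
    (∀ k c, (A * D) k c =
        if c = i then (if k = i then u i ⬝ᵥ vi - h i else 0)
        else if c = j then (if k = j then u j ⬝ᵥ vj - h j else 0)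
        else u k ⬝ᵥ u c) ∧
    (A * D).det =
      (u i ⬝ᵥ vi - h i) * (u j ⬝ᵥ vj - h j) *
        (Matrix.of (fun a b : {k : Fin (d + 1) // k ≠ i ∧ k ≠ j} => u a ⬝ᵥ u b)).det ∧
    0 < (A * D).det := by
  have entry : ∀ k c, (A * D) k c =
      if c = i then (if k = i then u i ⬝ᵥ vi - h i else 0)
      else if c = j then (if k = j then u j ⬝ᵥ vj - h j else 0)
      else u k ⬝ᵥ u c := by
    intro k c
    rw [Matrix.mul_apply, Fin.sum_univ_castSucc]
    by_cases hci : c = i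
    · subst hci
      have h1 : ∀ r : Fin d, A k r.castSucc * D r.castSucc c = u k r * vi r :=
        fun r => by rw [(hA k).1 r, hDi.1 r]
      rw [Finset.sum_congr rfl (fun r _ => h1 r), (hA k).2, hDi.2, if_pos rfl]
      by_cases hki : k = c
      · rw [if_pos hki, hki]
        simp only [dotProduct, mul_one]
        ring
      · rw [if_neg hki, mul_one,
          show (∑ r, u k r * vi r) = u k ⬝ᵥ vi from rfl, hvi k hki]
        ring
    · by_cases hcj : c = j
      · subst hcj
        have h1 : ∀ r : Fin d, A k r.castSucc * D r.castSucc c = u k r * vj r :=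
          fun r => by rw [(hA k).1 r, hDj.1 r]
        rw [Finset.sum_congr rfl (fun r _ => h1 r), (hA k).2, hDj.2, if_neg hci, if_pos rfl]
        by_cases hkj : k = c
        · rw [if_pos hkj, hkj]
          simp only [dotProduct, mul_one]
          ring
        · rw [if_neg hkj, mul_one,
            show (∑ r, u k r * vj r) = u k ⬝ᵥ vj from rfl, hvj k hkj]
          ring
      · have h1 : ∀ r : Fin d, A k r.castSucc * D r.castSucc c = u k r * u c r :=
          fun r => by rw [(hA k).1 r, (hDk c hci hcj).1 r]
        rw [Finset.sum_congr rfl (fun r _ => h1 r), (hA k).2, (hDk c hci hcj).2,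
          if_neg hci, if_neg hcj, mul_zero, add_zero]
        rfl
  refine ⟨entry, ?_⟩
  have hdet : (A * D).det =
      (u i ⬝ᵥ vi - h i) * (u j ⬝ᵥ vj - h j) *
        (Matrix.of (fun a b : {k : Fin (d + 1) // k ≠ i ∧ k ≠ j} => u a ⬝ᵥ u b)).det := by
    rw [det_two_single (A * D) i j hij
      (fun k hk => by rw [entry k i]; simp [hk])
      (fun k hk => by rw [entry k j]; simp [hk, (hij.symm : j ≠ i)])]
    rw [entry i i, entry j j]
    simp only [if_pos rfl, if_neg hij, if_neg (hij.symm : j ≠ i)]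
    congr 1
    congr 1
    ext a b
    rw [Matrix.of_apply, Matrix.of_apply, entry a b]
    simp [b.2.1, b.2.2]
  refine ⟨hdet, ?_⟩
  rw [hdet]
  have hgram := (gram_posDef (fun k : {k : Fin (d + 1) // k ≠ i ∧ k ≠ j} => u k) hind).det_pos
  have h1 : 0 < (u i ⬝ᵥ vi - h i) * (u j ⬝ᵥ vj - h j) :=
    mul_pos_of_neg_of_neg (by linarith) (by linarith)
  exact mul_pos h1 hgram
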